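/- arXiv:2108.07658 — 2 statements merged into one kernel-verified Lean document; each statement's English description precedes it below -/
import Mathlib

section
/- Let n, m be positive integers, w_m, y_m : ℝ → ℝⁿ and w_s, y_s : ℝ → ℝᵐ, and P⁺_mt, P⁻_mt, P⁺_st, P⁻_st : ℝ → ℝ. Let x_mt, x_st : ℝ → ℝ be differentiable and nonvanishing, satisfying the tank dynamics x_mt' = −⟨w_m, y_m⟩/x_mt + (P⁺_mt − P⁻_mt)/x_mt and x_st' = −⟨w_s, y_s⟩/x_st + (P⁺_st − P⁻_st)/x_st. Let H_c : ℝ → ℝ be differentiable with H_c' = P⁻_mt − P⁺_mt + P⁻_st − P⁺_st. Set H_mt = x_mt²/2, H_st = x_st²/2, u_mc = w_m, u_sc = w_s. Then for all t, (H_mt + H_c + H_st)'(t) = −⟨u_mc(t), y_m(t)⟩ − ⟨u_sc(t), y_s(t)⟩. -/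
open scoped RealInnerProductSpace

theorem bilateral_teleoperator_energy_balance
    (n m : ℕ) (hn : 0 < n) (hm : 0 < m)
    (wm ym : ℝ → EuclideanSpace ℝ (Fin n)) (ws ys : ℝ → EuclideanSpace ℝ (Fin m))
    (Ppmt Pmmt Ppst Pmst : ℝ → ℝ) (xmt xst : ℝ → ℝ)
    (hxmt : Differentiable ℝ xmt) (hxst : Differentiable ℝ xst)
    (hxmt0 : ∀ t, xmt t ≠ 0) (hxst0 : ∀ t, xst t ≠ 0)
    (hdynm : ∀ t : ℝ, deriv xmt t = -⟪wm t, ym t⟫ / xmt t + (Ppmt t - Pmmt t) / xmt t)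
    (hdyns : ∀ t : ℝ, deriv xst t = -⟪ws t, ys t⟫ / xst t + (Ppst t - Pmst t) / xst t)
    (Hc : ℝ → ℝ) (hHc : Differentiable ℝ Hc)
    (hHcderiv : ∀ t : ℝ, deriv Hc t = Pmmt t - Ppmt t + Pmst t - Ppst t)
    (Hmt Hst : ℝ → ℝ)
    (hHmt : ∀ t, Hmt t = xmt t ^ 2 / 2) (hHst : ∀ t, Hst t = xst t ^ 2 / 2)
    (umc : ℝ → EuclideanSpace ℝ (Fin n)) (usc : ℝ → EuclideanSpace ℝ (Fin m))
    (humc : umc = wm) (husc : usc = ws) :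
    ∀ t : ℝ, deriv (fun s => Hmt s + Hc s + Hst s) t =
      -⟪umc t, ym t⟫ - ⟪usc t, ys t⟫ := by
  intro t
  have hHmtf : Hmt = fun s => xmt s ^ 2 / 2 := funext hHmt
  have hHstf : Hst = fun s => xst s ^ 2 / 2 := funext hHst
  subst hHmtf hHstf
  have dmt : HasDerivAt (fun s => xmt s ^ 2 / 2) (xmt t * deriv xmt t) t := by
    have := ((hxmt t).hasDerivAt.pow 2).div_const 2
    refine this.congr_deriv ?_; norm_num; ring
  have dst : HasDerivAt (fun s => xst s ^ 2 / 2) (xst t * deriv xst t) t := by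
    have := ((hxst t).hasDerivAt.pow 2).div_const 2
    refine this.congr_deriv ?_; norm_num; ring
  have h : HasDerivAt (fun s => xmt s ^ 2 / 2 + Hc s + xst s ^ 2 / 2)
      (xmt t * deriv xmt t + deriv Hc t + xst t * deriv xst t) t :=
    (dmt.add (hHc t).hasDerivAt).add dst
  have e1 : xmt t * deriv xmt t = -⟪wm t, ym t⟫ + (Ppmt t - Pmmt t) := by
    rw [hdynm, mul_add, mul_div_cancel₀ _ (hxmt0 t), mul_div_cancel₀ _ (hxmt0 t)]
  have e2 : xst t * deriv xst t = -⟪ws t, ys t⟫ + (Ppst t - Pmst t) := by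
    rw [hdyns, mul_add, mul_div_cancel₀ _ (hxst0 t), mul_div_cancel₀ _ (hxst0 t)]
  rw [h.deriv, e1, e2, hHcderiv, humc, husc]
  ring
end

section
/- Under the setup of the bilateral-teleoperator energy balance — x_mt, x_st : ℝ → ℝ differentiable and nonvanishing with x_mt' = (−⟨w_m, y_m⟩ + P⁺_mt − P⁻_mt)/x_mt and x_st' = (−⟨w_s, y_s⟩ + P⁺_st − P⁻_st)/x_st, H_c differentiable with H_c' = P⁻_mt − P⁺_mt + P⁻_st − P⁺_st and H_c ≥ 0, all signals continuous — the total storage H := x_mt²/2 + H_c + x_st²/2 is nonnegative and satisfies, for all t ≥ 0, H(t) − H(0) ≤ ∫₀ᵗ (⟨−w_m(s), y_m(s)⟩ + ⟨−w_s(s), y_s(s)⟩) ds. That is, the bilateral teleoperator is passive with respect to the input (−u_mc, −u_sc) = (−w_m, −w_s) and the output (y_m, y_s). -/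
open scoped RealInnerProductSpace

theorem bilateral_teleoperator_is_passive
    (n m : ℕ) (hn : 0 < n) (hm : 0 < m)
    (wm ym : ℝ → EuclideanSpace ℝ (Fin n)) (ws ys : ℝ → EuclideanSpace ℝ (Fin m))
    (Ppmt Pmmt Ppst Pmst : ℝ → ℝ)
    (hwm : Continuous wm) (hym : Continuous ym) (hws : Continuous ws) (hys : Continuous ys)
    (hPpmt : Continuous Ppmt) (hPmmt : Continuous Pmmt)
    (hPpst : Continuous Ppst) (hPmst : Continuous Pmst)
    (xmt xst : ℝ → ℝ)
    (hxmt : Differentiable ℝ xmt) (hxst : Differentiable ℝ xst)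
    (hxmt0 : ∀ t, xmt t ≠ 0) (hxst0 : ∀ t, xst t ≠ 0)
    (hdynm : ∀ t : ℝ, deriv xmt t = (-⟪wm t, ym t⟫ + Ppmt t - Pmmt t) / xmt t)
    (hdyns : ∀ t : ℝ, deriv xst t = (-⟪ws t, ys t⟫ + Ppst t - Pmst t) / xst t)
    (Hc : ℝ → ℝ) (hHc : Differentiable ℝ Hc) (hHc0 : ∀ t, 0 ≤ Hc t)
    (hHcderiv : ∀ t : ℝ, deriv Hc t = Pmmt t - Ppmt t + Pmst t - Ppst t)
    (H : ℝ → ℝ) (hH : ∀ t, H t = xmt t ^ 2 / 2 + Hc t + xst t ^ 2 / 2) :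
    (∀ t, 0 ≤ H t) ∧
    (∀ t : ℝ, 0 ≤ t →
      H t - H 0 ≤ ∫ s in (0:ℝ)..t, (⟪-wm s, ym s⟫ + ⟪-ws s, ys s⟫)) := by
  constructor
  · intro t
    rw [hH t]
    have := hHc0 t
    positivity
  · intro t ht
    have key : ∀ s : ℝ, HasDerivAt (fun u => xmt u ^ 2 / 2 + Hc u + xst u ^ 2 / 2)
        (⟪-wm s, ym s⟫ + ⟪-ws s, ys s⟫) s := by
      intro s
      have h1 : HasDerivAt (fun u => xmt u ^ 2 / 2) (xmt s * deriv xmt s) s := by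
        have := ((hxmt s).hasDerivAt.pow 2).div_const 2
        simpa [mul_comm, mul_assoc, mul_div_assoc] using this
      have h2 : HasDerivAt Hc (deriv Hc s) s := (hHc s).hasDerivAt
      have h3 : HasDerivAt (fun u => xst u ^ 2 / 2) (xst s * deriv xst s) s := by
        have := ((hxst s).hasDerivAt.pow 2).div_const 2
        simpa [mul_comm, mul_assoc, mul_div_assoc] using this
      have := (h1.add h2).add h3
      refine this.congr_deriv (Eq.symm ?_)
      rw [hdynm s, hdyns s, hHcderiv s,
        mul_div_cancel₀ _ (hxmt0 s), mul_div_cancel₀ _ (hxst0 s)]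
      simp [inner_neg_left]
      ring
    have hcont : Continuous (fun s => ⟪-wm s, ym s⟫ + ⟪-ws s, ys s⟫) :=
      (hwm.neg.inner hym).add (hws.neg.inner hys)
    have := intervalIntegral.integral_eq_sub_of_hasDerivAt
      (f := fun u => xmt u ^ 2 / 2 + Hc u + xst u ^ 2 / 2)
      (fun s _ => key s) (hcont.intervalIntegrable 0 t)
    rw [hH t, hH 0, ← this]
end
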